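/- arXiv:quant-ph/0605218 — 3 statements merged into one kernel-verified Lean document; each statement's English description precedes it below -/
import Mathlib

section
/- Let U be a unitary operator on a finite-dimensional complex Hilbert space H, and P an orthogonal projection on H. If |i⟩ is a unit eigenvector of PUP with eigenvalue λ satisfying |λ| = 1, then P|i⟩ = |i⟩, |i⟩ is an eigenvector of U with eigenvalue of unit modulus, and (I − P)U|i⟩ = 0. -/
open ContinuousLinearMap

theorem stmt_4 {H : Type*} [NormedAddCommGroup H] [InnerProductSpace ℂ H]
    [FiniteDimensional ℂ H]
    (U P : H →L[ℂ] H)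
    (hU₁ : adjoint U ∘L U = 1) (hU₂ : U ∘L adjoint U = 1)
    (hP : P ∘L P = P) (hPsa : adjoint P = P)
    (i : H) (l : ℂ) (hi : ‖i‖ = 1) (hl : ‖l‖ = 1)
    (heig : (P ∘L U ∘L P) i = l • i) :
    P i = i ∧ (∃ μ : ℂ, ‖μ‖ = 1 ∧ U i = μ • i) ∧ (1 - P) (U i) = 0 := by
  have hl0 : l ≠ 0 := by
    intro h; simp [h] at hl
  have hPP : ∀ x, P (P x) = P x := fun x => by
    have := DFunLike.congr_fun hP x
    simpa using this
  have hPi : P i = i := by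
    have h1 : P ((P ∘L U ∘L P) i) = (P ∘L U ∘L P) i := by
      simp only [ContinuousLinearMap.comp_apply]
      exact hPP _
    rw [heig] at h1
    rw [map_smul] at h1
    exact smul_right_injective H hl0 h1
  have hPUi : P (U i) = l • i := by
    have := heig
    simp only [ContinuousLinearMap.comp_apply, hPi] at this
    exact this
  -- self-adjointness of P on inner products
  have hPinner : ∀ x y : H, (inner ℂ (P x) y : ℂ) = inner ℂ x (P y) := by
    intro x y
    conv_lhs => rw [← hPsa]
    exact ContinuousLinearMap.adjoint_inner_left P y x
  -- norm of U i
  have hUinner : (inner ℂ (U i) (U i) : ℂ) = inner ℂ i i := by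
    have h := ContinuousLinearMap.adjoint_inner_left U i (U i)
    have hadj : adjoint U (U i) = i := by
      have := DFunLike.congr_fun hU₁ i
      simpa using this
    rw [hadj] at h
    exact h.symm
  have hii : (inner ℂ i i : ℂ) = 1 := by
    rw [inner_self_eq_norm_sq_to_K, hi]
    norm_num
  have hPUPU : (inner ℂ (P (U i)) (P (U i)) : ℂ) = 1 := by
    rw [hPUi, inner_smul_left, inner_smul_right, hii]
    have h1 : (starRingEnd ℂ) l * l = 1 := by
      rw [mul_comm, Complex.mul_conj]
      norm_cast
      rw [Complex.normSq_eq_norm_sq, hl]; norm_num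
    rw [mul_one, h1]
  have hUPU : (inner ℂ (U i) (P (U i)) : ℂ) = 1 := by
    calc (inner ℂ (U i) (P (U i)) : ℂ) = inner ℂ (U i) (P (P (U i))) := by rw [hPP]
      _ = inner ℂ (P (U i)) (P (U i)) := by rw [← hPinner]
      _ = 1 := hPUPU
  have hPUU : (inner ℂ (P (U i)) (U i) : ℂ) = 1 := by
    calc (inner ℂ (P (U i)) (U i) : ℂ) = inner ℂ (P (P (U i))) (U i) := by rw [hPP]
      _ = inner ℂ (P (U i)) (P (U i)) := by rw [hPinner]
      _ = 1 := hPUPU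
  have hdiff : U i - P (U i) = 0 := by
    have : (inner ℂ (U i - P (U i)) (U i - P (U i)) : ℂ) = 0 := by
      rw [inner_sub_sub_self, hUinner, hii, hUPU, hPUU, hPUPU]
      ring
    exact inner_self_eq_zero.mp this
  have hUi : U i = l • i := by
    have : U i = P (U i) := by
      have := sub_eq_zero.mp hdiff
      exact this
    rw [this, hPUi]
  refine ⟨hPi, ⟨l, hl, hUi⟩, ?_⟩
  simp only [ContinuousLinearMap.sub_apply, ContinuousLinearMap.one_apply]
  exact hdiff
end

section
/- Let U_X = PUP where U is unitary and P an orthogonal projection, and let ρ be a density operator. Then there exists N with U_X^N (PρP) (U_X†)^N = 0 if and only if for every pure state |ψ_i⟩ appearing with positive weight p_i in some ensemble decomposition ρ = Σ_i p_i |ψ_i⟩⟨ψ_i|, there exists N_i with U_X^{N_i} P|ψ_i⟩ = 0. -/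
open Matrix
open scoped ComplexOrder

private lemma sandwich_aux {k : ℕ} (B : Matrix (Fin k) (Fin k) ℂ) (v : Fin k → ℂ) :
    B * Matrix.vecMulVec v (star v) * Bᴴ
      = Matrix.vecMulVec (B *ᵥ v) (star (B *ᵥ v)) := by
  rw [Matrix.vecMulVec_eq (Fin 1), Matrix.vecMulVec_eq (Fin 1), Matrix.star_mulVec,
    Matrix.replicateCol_mulVec, Matrix.replicateRow_vecMul]
  simp only [Matrix.mul_assoc]

private lemma vecMulVec_self_eq_zero {k : ℕ} {v : Fin k → ℂ}
    (h : Matrix.vecMulVec v (star v) = 0) : v = 0 := by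
  funext j
  have := congrFun (congrFun h j) j
  simp only [Matrix.vecMulVec_apply, Pi.star_apply, Matrix.zero_apply] at this
  have h2 : Complex.normSq (v j) = 0 := by
    have := congrArg Complex.re this
    simpa [Complex.mul_conj] using this
  simpa using Complex.normSq_eq_zero.mp h2

theorem stmt_11 (k : ℕ) (U : Matrix.unitaryGroup (Fin k) ℂ)
    (P : Matrix (Fin k) (Fin k) ℂ) (hP : P * P = P) (hPsa : Pᴴ = P)
    (ρ : Matrix (Fin k) (Fin k) ℂ) (hρ : ρ.PosSemidef) (hρtr : ρ.trace = 1)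
    (A : Matrix (Fin k) (Fin k) ℂ)
    (hA : A = P * (U : Matrix (Fin k) (Fin k) ℂ) * P) :
    (∃ N : ℕ, A ^ N * (P * ρ * P) * (Aᴴ) ^ N = 0) ↔
      ∀ (ι : Type) [Fintype ι] (p : ι → ℝ) (ψ : ι → Fin k → ℂ),
        (∀ i, 0 < p i) → (∑ i, p i = 1) →
        (∀ i, star (ψ i) ⬝ᵥ ψ i = 1) →
        (ρ = ∑ i, (p i : ℂ) • Matrix.vecMulVec (ψ i) (star (ψ i))) →
        ∀ i, ∃ N : ℕ, A ^ N *ᵥ (P *ᵥ ψ i) = 0 := by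
  classical
  have key : ∀ (N : ℕ) (ι : Type) [Fintype ι] (p : ι → ℝ) (ψ : ι → Fin k → ℂ),
      ρ = ∑ i, (p i : ℂ) • Matrix.vecMulVec (ψ i) (star (ψ i)) →
      A ^ N * (P * ρ * P) * (Aᴴ) ^ N
        = ∑ i, (p i : ℂ) • Matrix.vecMulVec ((A ^ N * P) *ᵥ ψ i)
            (star ((A ^ N * P) *ᵥ ψ i)) := by
    intro N ι _ p ψ hdec
    have hB : A ^ N * (P * ρ * P) * (Aᴴ) ^ N
        = (A ^ N * P) * ρ * (A ^ N * P)ᴴ := by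
      rw [Matrix.conjTranspose_mul, hPsa, Matrix.conjTranspose_pow]
      simp only [Matrix.mul_assoc]
    rw [hB, hdec, Finset.mul_sum, Finset.sum_mul]
    apply Finset.sum_congr rfl
    intro i _
    rw [Matrix.mul_smul, Matrix.smul_mul, sandwich_aux]
  constructor
  · rintro ⟨N, hN⟩ ι _ p ψ hp _ _ hdec i
    refine ⟨N, ?_⟩
    rw [key N ι p ψ hdec] at hN
    -- take trace
    have htr := congrArg Matrix.trace hN
    simp only [Matrix.trace_sum, Matrix.trace_smul, Matrix.trace_zero] at htr
    have htr' : ∀ j, Matrix.trace (Matrix.vecMulVec ((A ^ N * P) *ᵥ ψ j)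
        (star ((A ^ N * P) *ᵥ ψ j)))
        = ((∑ x, Complex.normSq (((A ^ N * P) *ᵥ ψ j) x) : ℝ) : ℂ) := by
      intro j
      simp [Matrix.trace, Matrix.diag, Matrix.vecMulVec_apply, Complex.mul_conj]
    have hre : (∑ j, p j * ∑ x, Complex.normSq (((A ^ N * P) *ᵥ ψ j) x)) = 0 := by
      have : ((∑ j, p j * ∑ x, Complex.normSq (((A ^ N * P) *ᵥ ψ j) x) : ℝ) : ℂ) = 0 := by
        rw [← htr]
        push_cast
        exact Finset.sum_congr rfl fun j _ => by rw [htr' j, smul_eq_mul]; push_cast; ring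
      exact_mod_cast this
    have hzero : p i * ∑ x, Complex.normSq (((A ^ N * P) *ᵥ ψ i) x) = 0 := by
      have := (Finset.sum_eq_zero_iff_of_nonneg (fun j _ => by
        have : (0:ℝ) ≤ ∑ x, Complex.normSq (((A ^ N * P) *ᵥ ψ j) x) :=
          Finset.sum_nonneg fun x _ => Complex.normSq_nonneg _
        exact mul_nonneg (hp j).le this)).mp hre
      exact this i (Finset.mem_univ i)
    have hsum0 : ∑ x, Complex.normSq (((A ^ N * P) *ᵥ ψ i) x) = 0 :=
      by rcases mul_eq_zero.mp hzero with h | h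
         · exact absurd h (hp i).ne'
         · exact h
    have hv : (A ^ N * P) *ᵥ ψ i = 0 := by
      funext x
      have := (Finset.sum_eq_zero_iff_of_nonneg
        (fun x _ => Complex.normSq_nonneg _)).mp hsum0 x (Finset.mem_univ x)
      simpa using Complex.normSq_eq_zero.mp this
    rw [Matrix.mulVec_mulVec]
    exact hv
  · intro H
    set h := hρ.1 with hh
    set V := (Matrix.IsHermitian.eigenvectorUnitary h : Matrix (Fin k) (Fin k) ℂ) with hV
    set lam := h.eigenvalues with hlam
    -- full rank-one decomposition
    have hdecfull : ρ = ∑ j, (lam j : ℂ) •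
        Matrix.vecMulVec (fun x => V x j) (star (fun x => V x j)) := by
      have h1 : ρ = Matrix.of (fun x j => V x j * (lam j : ℂ)) * star V := by
        conv_lhs => rw [h.spectral_theorem, Unitary.conjStarAlgAut_apply]
        rw [← hV]
        congr 1
        ext x j
        simp [Matrix.mul_diagonal, hlam]
      rw [h1]
      ext x y
      simp only [Matrix.mul_apply, Matrix.of_apply, Matrix.sum_apply, Matrix.smul_apply,
        Matrix.vecMulVec_apply, Pi.star_apply, smul_eq_mul, Matrix.star_apply]
      apply Finset.sum_congr rfl
      intro j _
      ring
    have hVunit : (star V) * V = 1 := by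
      have := (Matrix.IsHermitian.eigenvectorUnitary h).2
      exact (Matrix.mem_unitaryGroup_iff').mp (by exact_mod_cast this)
    have hlamnn : ∀ j, 0 ≤ lam j := fun j => hρ.eigenvalues_nonneg j
    -- sum of eigenvalues = 1
    have hlamsum : ∑ j, lam j = 1 := by
      have htr : ρ.trace = ∑ j, (lam j : ℂ) := by
        conv_lhs => rw [h.spectral_theorem, Unitary.conjStarAlgAut_apply]
        rw [← hV, Matrix.trace_mul_cycle, hVunit, Matrix.one_mul,
          Matrix.trace_diagonal]
        rfl
      have : ((∑ j, lam j : ℝ) : ℂ) = 1 := by rw [← hρtr, htr]; push_cast; ring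
      exact_mod_cast this
    -- restrict to nonzero eigenvalues
    set ι := {j : Fin k // lam j ≠ 0} with hι
    set p : ι → ℝ := fun i => lam i.1 with hp
    set ψ : ι → Fin k → ℂ := fun i x => V x i.1 with hψ
    have hsubsum : ∀ (f : Fin k → ℂ) , True := fun _ => trivial
    have hppos : ∀ i : ι, 0 < p i := fun i => lt_of_le_of_ne (hlamnn i.1) (Ne.symm i.2)
    have hfilter : ∀ {M : Type} [AddCommMonoid M] (f : Fin k → M),
        (∀ j, lam j = 0 → f j = 0) → ∑ i : ι, f i.1 = ∑ j, f j := by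
      intro M _ f hf
      rw [← Finset.sum_filter_of_ne (p := fun j => lam j ≠ 0)
        (fun x _ hx => by by_contra hc; exact hx (hf x hc))]
      exact (Finset.sum_subtype _ (fun x => by simp) f).symm
    have hpsum : ∑ i, p i = 1 := by
      have h2 : ∑ i, p i = ∑ j, lam j := hfilter lam (fun j hj => hj)
      rw [h2]; exact hlamsum
    have hunit : ∀ i : ι, star (ψ i) ⬝ᵥ ψ i = 1 := by
      intro i
      have := congrFun (congrFun hVunit i.1) i.1
      simp only [Matrix.mul_apply, Matrix.one_apply_eq] at this
      rw [← this]
      simp [dotProduct, hψ, Matrix.star_apply]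
    have hdec : ρ = ∑ i, (p i : ℂ) • Matrix.vecMulVec (ψ i) (star (ψ i)) := by
      rw [hdecfull]
      exact (hfilter (fun j => (lam j : ℂ) •
        Matrix.vecMulVec (fun x => V x j) (star (fun x => V x j)))
        (fun j hj => by simp [hj])).symm
    have hex := H ι p ψ hppos hpsum hunit hdec
    choose Ns hNs using hex
    set N := Finset.univ.sup Ns with hNdef
    refine ⟨N, ?_⟩
    have hvz : ∀ i : ι, (A ^ N * P) *ᵥ ψ i = 0 := by
      intro i
      have hle : Ns i ≤ N := Finset.le_sup (Finset.mem_univ i)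
      have : A ^ N = A ^ (N - Ns i) * A ^ (Ns i) := by
        rw [← pow_add, Nat.sub_add_cancel hle]
      rw [← Matrix.mulVec_mulVec, this, ← Matrix.mulVec_mulVec, hNs i,
        Matrix.mulVec_zero]
    rw [key N ι p ψ hdec]
    apply Finset.sum_eq_zero
    intro i _
    rw [hvz i]
    ext a b
    simp [Matrix.vecMulVec_apply]
end

section
/- Let A be a normal matrix with spectral decomposition A = Σ_i λ_i |i⟩⟨i| and ρ a positive semidefinite matrix with trace 1. Then lim_{n→∞} tr(A^n ρ (A†)^n) = Σ_{i : |λ_i| = 1} ⟨i|ρ|i⟩. In particular, the limit is 0 if and only if ⟨i|ρ|i⟩ = 0 for all i with |λ_i| = 1. -/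
open Matrix
open scoped ComplexOrder

theorem stmt_17 (k : ℕ) (A : Matrix (Fin k) (Fin k) ℂ)
    (hnormal : A * Aᴴ = Aᴴ * A)
    (e : Fin k → Fin k → ℂ) (lam : Fin k → ℂ)
    (horth : ∀ i j, star (e i) ⬝ᵥ e j = if i = j then (1 : ℂ) else 0)
    (hspec : A = ∑ i, lam i • Matrix.vecMulVec (e i) (star (e i)))
    (hcontr : ∀ i, ‖lam i‖ ≤ 1)
    (ρ : Matrix (Fin k) (Fin k) ℂ) (hρ : ρ.PosSemidef) (hρtr : ρ.trace = 1) :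
    Filter.Tendsto (fun n : ℕ => (A ^ n * ρ * (Aᴴ) ^ n).trace) Filter.atTop
        (nhds (∑ i ∈ Finset.univ.filter fun i => ‖lam i‖ = 1,
          star (e i) ⬝ᵥ (ρ *ᵥ e i))) ∧
      (Filter.Tendsto (fun n : ℕ => (A ^ n * ρ * (Aᴴ) ^ n).trace) Filter.atTop (nhds 0) ↔
        ∀ i, ‖lam i‖ = 1 → star (e i) ⬝ᵥ (ρ *ᵥ e i) = 0) := by
  set P : Fin k → Matrix (Fin k) (Fin k) ℂ := fun i => Matrix.vecMulVec (e i) (star (e i)) with hP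
  set c : Fin k → ℂ := fun i => star (e i) ⬝ᵥ (ρ *ᵥ e i) with hc
  have key : ∀ i j, P i * P j = (star (e i) ⬝ᵥ e j) • Matrix.vecMulVec (e i) (star (e j)) := by
    intro i j
    ext a b
    simp only [hP, Matrix.mul_apply, Matrix.vecMulVec_apply, Matrix.smul_apply, Pi.star_apply,
      dotProduct, smul_eq_mul, Finset.sum_mul]
    apply Finset.sum_congr rfl
    intro x _
    ring
  have hPP : ∀ i j, P i * P j = if i = j then P i else 0 := by
    intro i j
    rw [key, horth]
    split_ifs with h
    · subst h; simp [hP]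
    · simp
  have hsum1 : ∑ i, P i = (1 : Matrix (Fin k) (Fin k) ℂ) := by
    set M : Matrix (Fin k) (Fin k) ℂ := fun a j => e j a with hM
    have h1 : Mᴴ * M = 1 := by
      ext i j
      have := horth i j
      simp only [Matrix.mul_apply, Matrix.conjTranspose_apply]
      simpa [Matrix.mul_apply, Matrix.conjTranspose_apply, dotProduct, hM,
        Matrix.one_apply] using this
    have h2 : M * Mᴴ = 1 := mul_eq_one_comm.mp h1
    calc ∑ i, P i = M * Mᴴ := by
          ext a b
          simp only [Matrix.mul_apply, Matrix.conjTranspose_apply]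
          simp [hP, Matrix.sum_apply, Matrix.mul_apply, Matrix.vecMulVec_apply,
            Matrix.conjTranspose_apply, hM]
    _ = 1 := h2
  have hApow : ∀ n : ℕ, A ^ n = ∑ i, (lam i) ^ n • P i := by
    intro n
    induction n with
    | zero => simp [hsum1]
    | succ n ih =>
      rw [pow_succ, ih, show A = ∑ i, lam i • P i from hspec]
      rw [Finset.sum_mul_sum]
      have : ∀ i j, ((lam i) ^ n • P i) * (lam j • P j) = ((lam i) ^ n * lam j) • (P i * P j) := by
        intro i j
        rw [smul_mul_smul_comm]
      simp_rw [this, hPP]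
      simp [Finset.sum_ite_eq, pow_succ]
  have hAHpow : ∀ n : ℕ, (Aᴴ) ^ n = ∑ i, ((starRingEnd ℂ) (lam i)) ^ n • P i := by
    intro n
    have hPH : ∀ i, (P i)ᴴ = P i := by
      intro i
      ext a b
      simp [hP, Matrix.conjTranspose_apply, Matrix.vecMulVec_apply, mul_comm]
    rw [← Matrix.conjTranspose_pow, hApow n]
    rw [Matrix.conjTranspose_sum]
    apply Finset.sum_congr rfl
    intro i _
    rw [Matrix.conjTranspose_smul, hPH, star_pow]
    rfl
  have htrPρ : ∀ i, (P i * ρ).trace = c i := by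
    intro i
    simp only [Matrix.trace, Matrix.diag, Matrix.mul_apply, hP, Matrix.vecMulVec_apply,
      Pi.star_apply, hc, dotProduct, Matrix.mulVec, Finset.mul_sum]
    rw [Finset.sum_comm]
    apply Finset.sum_congr rfl
    intro x _
    apply Finset.sum_congr rfl
    intro y _
    ring
  have htr : ∀ n : ℕ, (A ^ n * ρ * (Aᴴ) ^ n).trace
      = ∑ i, (lam i * (starRingEnd ℂ) (lam i)) ^ n * c i := by
    intro n
    rw [hApow n, hAHpow n, Finset.sum_mul, Finset.sum_mul, Matrix.trace_sum]
    simp_rw [Finset.mul_sum, Matrix.trace_sum]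
    apply Finset.sum_congr rfl
    intro i _
    have : ∀ j, ((lam i ^ n • P i) * ρ * ((starRingEnd ℂ) (lam j) ^ n • P j)).trace
        = (lam i ^ n * (starRingEnd ℂ) (lam j) ^ n) * (if j = i then c i else 0) := by
      intro j
      rw [smul_mul_assoc, smul_mul_assoc, mul_smul_comm, smul_smul, Matrix.trace_smul,
        Matrix.trace_mul_cycle, hPP]
      split_ifs with h
      · subst h; rw [htrPρ]; simp [smul_eq_mul]
      · simp
    simp_rw [this]
    simp [Finset.sum_ite_eq, mul_pow, mul_comm]
  have hterm : ∀ i, Filter.Tendsto (fun n : ℕ => (lam i * (starRingEnd ℂ) (lam i)) ^ n * c i)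
      Filter.atTop (nhds (if ‖lam i‖ = 1 then c i else 0)) := by
    intro i
    by_cases h : ‖lam i‖ = 1
    · have h1 : lam i * (starRingEnd ℂ) (lam i) = 1 := by
        rw [Complex.mul_conj]
        norm_cast
        rw [Complex.normSq_eq_norm_sq, h]; norm_num
      simp [h, h1]
    · have h1 : ‖lam i * (starRingEnd ℂ) (lam i)‖ < 1 := by
        rw [norm_mul, Complex.norm_conj]
        have : ‖lam i‖ < 1 := lt_of_le_of_ne (hcontr i) h
        nlinarith [norm_nonneg (lam i)]
      have := (tendsto_pow_atTop_nhds_zero_of_norm_lt_one h1).mul_const (c i)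
      simpa [h] using this
  have hmain : Filter.Tendsto (fun n : ℕ => (A ^ n * ρ * (Aᴴ) ^ n).trace) Filter.atTop
      (nhds (∑ i ∈ Finset.univ.filter fun i => ‖lam i‖ = 1, c i)) := by
    have := tendsto_finset_sum Finset.univ (fun i _ => hterm i)
    rw [← Finset.sum_filter] at this
    exact this.congr fun n => (htr n).symm
  refine ⟨hmain, ?_, ?_⟩
  · intro h0
    have hS : (∑ i ∈ Finset.univ.filter fun i => ‖lam i‖ = 1, c i) = 0 :=
      tendsto_nhds_unique hmain h0
    intro i hi
    have hnn : ∀ j ∈ Finset.univ.filter fun i => ‖lam i‖ = 1, (0:ℂ) ≤ c j :=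
      fun j _ => hρ.dotProduct_mulVec_nonneg (e j)
    exact (Finset.sum_eq_zero_iff_of_nonneg hnn).mp hS i (by simp [hi])
  · intro h
    have : (∑ i ∈ Finset.univ.filter fun i => ‖lam i‖ = 1, c i) = 0 :=
      Finset.sum_eq_zero fun i hi => h i (by simpa using hi)
    rwa [this] at hmain
end
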